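/- Let n ≥ 2, let z_1, …, z_n be arbitrary vectors in ℝ^m, set s_j := z_{j+1} − z_j with indices taken mod n (z_{n+1} := z_1), and let μ be a permutation of {1, …, n}. If α ∈ ℝ^m satisfies ⟨z_{μ(j)} − z_{μ(j+1)}, α⟩ ≥ 0 for all j = 1, …, n−1, then ⟨α, Σ_{j=1}^{k} s_{μ(j)}⟩ ≤ 0 for every k = 1, …, n−1. -/
import Mathlib


open Filter Topology

noncomputable section

/-- The monomial `x^z = ∏ l, x l ^ z l`. -/
def mono {m : ℕ} (zv : Fin m → ℕ) (x : Fin m → ℝ) : ℝ := ∏ l, x l ^ zv l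

/-- The ratio monomial `(x/x*)^z = ∏ l, (x l / x* l) ^ z l`. -/
def ratio {m : ℕ} (xstar x : Fin m → ℝ) (zv : Fin m → ℕ) : ℝ :=
  ∏ l, (x l / xstar l) ^ zv l

/-- The mass-action vector field `f(x) = Σ_{i,j} k(i,j) (z_j - z_i) x^{z_i}`
(terms with `k i j = 0` vanish, so this is the sum over reactions). -/
def maf {m n : ℕ} (z : Fin n → Fin m → ℕ) (k : Fin n → Fin n → ℝ) (x : Fin m → ℝ) :
    Fin m → ℝ :=
  fun l => ∑ i, ∑ j, k i j * ((z j l : ℝ) - (z i l : ℝ)) * mono (z i) x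

/-- `x*` is a complex balanced equilibrium. -/
def complexBalanced {m n : ℕ} (z : Fin n → Fin m → ℕ) (k : Fin n → Fin n → ℝ)
    (xstar : Fin m → ℝ) : Prop :=
  ∀ i, ∑ j, k j i * mono (z j) xstar = mono (z i) xstar * ∑ j, k i j

/-- Cyclic successor on `Fin n`. -/
def cyc {n : ℕ} (i : Fin n) : Fin n := ⟨(i.val + 1) % n, Nat.mod_lt _ i.pos⟩

/-- The system is cyclic: its reactions are exactly `C_i → C_{i+1}` (cyclically). -/
def isCyclic {n : ℕ} (k : Fin n → Fin n → ℝ) : Prop :=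
  (∀ i, 0 < k i (cyc i)) ∧ ∀ i j, j ≠ cyc i → k i j = 0

/-- Inclusion `Fin (n-1) → Fin n`. -/
def emb {n : ℕ} (i : Fin (n - 1)) : Fin n := ⟨i.val, by have := i.isLt; omega⟩

/-- Successor inclusion `Fin (n-1) → Fin n`, `i ↦ i+1`. -/
def embS {n : ℕ} (i : Fin (n - 1)) : Fin n := ⟨i.val + 1, by have := i.isLt; omega⟩

/-- The stratum associated with a permutation `μ` of the complexes. -/
def stratum {m n : ℕ} (z : Fin n → Fin m → ℕ) (xstar : Fin m → ℝ)
    (μ : Equiv.Perm (Fin n)) : Set (Fin m → ℝ) :=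
  {x | (∀ l, 0 < x l) ∧
    ∀ i : Fin (n - 1), ratio xstar x (z (μ (emb i))) > ratio xstar x (z (μ (embS i)))}

/-- `L_I`: the relative interior of the face of the nonnegative orthant given by `I`. -/
def LI {m : ℕ} (I : Finset (Fin m)) : Set (Fin m → ℝ) :=
  {x | (∀ i ∈ I, x i = 0) ∧ ∀ i ∉ I, 0 < x i}

/-- Semi-locking set. -/
def semiLocking {m n : ℕ} (z : Fin n → Fin m → ℕ) (k : Fin n → Fin n → ℝ)
    (I : Finset (Fin m)) : Prop :=
  I.Nonempty ∧ ∀ i j : Fin n, 0 < k i j → (∃ l ∈ I, 0 < z j l) → ∃ l ∈ I, 0 < z i l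

/-- The stoichiometric subspace. -/
def stoich {m n : ℕ} (z : Fin n → Fin m → ℕ) (k : Fin n → Fin n → ℝ) :
    Submodule ℝ (Fin m → ℝ) :=
  Submodule.span ℝ {v | ∃ i j : Fin n, 0 < k i j ∧ v = fun l => (z j l : ℝ) - (z i l : ℝ)}

private lemma sum_sub_mul {m : ℕ} (α u v : Fin m → ℝ) :
    ∑ l, (u l - v l) * α l = (∑ l, u l * α l) - (∑ l, v l * α l) := by
  rw [← Finset.sum_sub_distrib]
  exact Finset.sum_congr rfl fun _ _ => by ring

private lemma sum_mul_sub' {m : ℕ} (α u v : Fin m → ℝ) :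
    ∑ l, α l * (u l - v l) = (∑ l, u l * α l) - (∑ l, v l * α l) := by
  rw [← Finset.sum_sub_distrib]
  exact Finset.sum_congr rfl fun _ _ => by ring

private lemma cyc_inj {n : ℕ} : Function.Injective (cyc (n := n)) := by
  intro i j h
  have h' : (i.val + 1) % n = (j.val + 1) % n := congrArg Fin.val h
  have key : ∀ x : Fin n, (x.val + 1) % n = if x.val + 1 = n then 0 else x.val + 1 := by
    intro x
    split
    · simp_all
    · exact Nat.mod_eq_of_lt (by have := x.isLt; omega)
  rw [key, key] at h'
  ext
  split_ifs at h' <;> omega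

/-- with `s_j := z_{j+1} - z_j` (indices mod `n`), if
`⟨z_{μ(j)} - z_{μ(j+1)}, α⟩ ≥ 0` for `j = 1, …, n-1`, then
`⟨α, Σ_{j=1}^k s_{μ(j)}⟩ ≤ 0` for every `k = 1, …, n-1`. -/
theorem stmt5 {m n : ℕ} (hn : 2 ≤ n) (z : Fin n → Fin m → ℝ) (μ : Equiv.Perm (Fin n))
    (α : Fin m → ℝ)
    (hα : ∀ j : Fin (n - 1), 0 ≤ ∑ l, (z (μ (emb j)) l - z (μ (embS j)) l) * α l) :
    ∀ kk : ℕ, 1 ≤ kk → kk ≤ n - 1 →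
      (∑ l, α l * ∑ j ∈ Finset.univ.filter (fun j : Fin n => j.val < kk),
          (z (cyc (μ j)) l - z (μ j) l)) ≤ 0 := by
  intro kk hk1 hk2
  set a : Fin n → ℝ := fun i => ∑ l, z i l * α l with ha
  -- step: a is non-increasing along μ
  have step : ∀ (q : ℕ) (h : q + 1 < n), a (μ ⟨q + 1, h⟩) ≤ a (μ ⟨q, by omega⟩) := by
    intro q h
    have hh := hα ⟨q, by omega⟩
    have e1 : emb (n := n) ⟨q, by omega⟩ = ⟨q, by omega⟩ := rfl
    have e2 : embS (n := n) ⟨q, by omega⟩ = ⟨q + 1, h⟩ := rfl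
    rw [e1, e2, sum_sub_mul] at hh
    simp only [ha]
    linarith
  have mono : ∀ (p q : ℕ) (hp : p < n) (hq : q < n), p ≤ q →
      a (μ ⟨q, hq⟩) ≤ a (μ ⟨p, hp⟩) := by
    intro p q hp hq hpq
    induction q with
    | zero =>
      have : p = 0 := by omega
      subst this; exact le_refl _
    | succ q ih =>
      rcases Nat.eq_or_lt_of_le hpq with h | h
      · subst h; exact le_refl _
      · have hq' : q < n := by omega
        exact le_trans (step q hq) (ih hq' (by omega))
  have hkkn : kk - 1 < n := by omega
  set c : ℝ := a (μ ⟨kk - 1, hkkn⟩) with hc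
  set F : Finset (Fin n) := Finset.univ.filter (fun j : Fin n => j.val < kk) with hF
  set S : Finset (Fin n) := F.image μ with hS
  set T : Finset (Fin n) := F.image (fun j => cyc (μ j)) with hT
  have hSmem : ∀ x : Fin n, x ∈ S ↔ (μ.symm x).val < kk := by
    intro x
    simp only [hS, Finset.mem_image, hF, Finset.mem_filter, Finset.mem_univ, true_and]
    constructor
    · rintro ⟨j, hj, rfl⟩; simpa using hj
    · intro hx; exact ⟨μ.symm x, hx, by simp⟩
  have hinS : ∀ x ∈ S, c ≤ a x := by
    intro x hx
    rw [hSmem] at hx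
    have : x = μ ⟨(μ.symm x).val, (μ.symm x).isLt⟩ := by simp
    rw [this]
    exact mono _ _ _ hkkn (by omega)
  have hnotS : ∀ x ∉ S, a x ≤ c := by
    intro x hx
    rw [hSmem] at hx
    have : x = μ ⟨(μ.symm x).val, (μ.symm x).isLt⟩ := by simp
    rw [this]
    exact mono _ _ hkkn _ (by omega)
  -- rewrite goal
  have hgoal : (∑ l, α l * ∑ j ∈ F, (z (cyc (μ j)) l - z (μ j) l))
      = (∑ x ∈ T, a x) - (∑ x ∈ S, a x) := by
    have h1 : (∑ l, α l * ∑ j ∈ F, (z (cyc (μ j)) l - z (μ j) l))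
        = ∑ j ∈ F, (a (cyc (μ j)) - a (μ j)) := by
      simp only [Finset.mul_sum]
      rw [Finset.sum_comm]
      exact Finset.sum_congr rfl fun j _ => sum_mul_sub' α _ _
    rw [h1, Finset.sum_sub_distrib]
    congr 1
    · rw [hT, Finset.sum_image (fun x _ y _ h => μ.injective (cyc_inj h))]
    · rw [hS, Finset.sum_image (fun x _ y _ h => μ.injective h)]
  rw [hgoal, sub_nonpos]
  -- card facts
  have hcardS : S.card = F.card := Finset.card_image_of_injective _ μ.injective
  have hcardT : T.card = F.card :=
    Finset.card_image_of_injective _ (cyc_inj.comp μ.injective)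
  have hd1 : (T \ S).card + (T ∩ S).card = T.card := Finset.card_sdiff_add_card_inter T S
  have hd2 : (S \ T).card + (S ∩ T).card = S.card := Finset.card_sdiff_add_card_inter S T
  have hic : (T ∩ S).card = (S ∩ T).card := by rw [Finset.inter_comm]
  have hcard : (T \ S).card = (S \ T).card := by omega
  have e1 : (∑ x ∈ T ∩ S, a x) + (∑ x ∈ T \ S, a x) = ∑ x ∈ T, a x :=
    Finset.sum_inter_add_sum_sdiff T S a
  have e2 : (∑ x ∈ S ∩ T, a x) + (∑ x ∈ S \ T, a x) = ∑ x ∈ S, a x :=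
    Finset.sum_inter_add_sum_sdiff S T a
  have e3 : (∑ x ∈ T ∩ S, a x) = ∑ x ∈ S ∩ T, a x := by rw [Finset.inter_comm]
  have b1 : (∑ x ∈ T \ S, a x) ≤ (T \ S).card • c :=
    Finset.sum_le_card_nsmul _ _ _ (fun x hx => hnotS x (Finset.mem_sdiff.mp hx).2)
  have b2 : (S \ T).card • c ≤ (∑ x ∈ S \ T, a x) :=
    Finset.card_nsmul_le_sum _ _ _ (fun x hx => hinS x (Finset.mem_sdiff.mp hx).1)
  rw [hcard] at b1
  linarith
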